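/- arXiv:1511.00209 — 3 statements merged into one kernel-verified Lean document; each statement's English description precedes it below -/
import Mathlib

section
/- Let p and q be relatively prime positive integers. Then the subshift generated by the type-S skew Sturmian sequence S(0,q/p) of frequency q/p is conjugate to the subshift generated by the type-S′ skew Sturmian sequence S′(0,p/q) of frequency p/q. -/
open Classical

/-- The shift map `σ` on bi-infinite sequences: `σ(x)_i = x_{i+1}`. -/
def shiftMap {A : Type*} (x : ℤ → A) : ℤ → A := fun i => x (i + 1)

/-- The iterated shift `σ^k` for `k ∈ ℤ`: `σ^k(x)_i = x_{i+k}`. -/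
def shiftZ {A : Type*} (k : ℤ) (x : ℤ → A) : ℤ → A := fun i => x (i + k)

/-- `x` is periodic with period `N > 0`, i.e. `σ^N(x) = x`. -/
def IsPeriodicWith {A : Type*} (x : ℤ → A) (N : ℕ) : Prop :=
  0 < N ∧ ∀ i : ℤ, x (i + N) = x i

/-- `x` is periodic (with some period `N > 0`). -/
def IsPeriodicSeq {A : Type*} (x : ℤ → A) : Prop := ∃ N : ℕ, IsPeriodicWith x N

/-- The sequence `p(x;i,n)` obtained from `x` by removing the block `x_{i+1} ⋯ x_{i+n}`. -/
def removeBlock {A : Type*} (x : ℤ → A) (i : ℤ) (n : ℕ) : ℤ → A :=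
  fun k => if k ≤ i then x k else x (k + n)

/-- `(i,n)` is an anomaly occurrence of `x`: `n > 0` and `p(x;i,n)` is periodic. -/
def IsAnomalyOcc {A : Type*} (x : ℤ → A) (i : ℤ) (n : ℕ) : Prop :=
  0 < n ∧ IsPeriodicSeq (removeBlock x i n)

/-- `x` is eventually periodic: non-periodic, but removing some block leaves a periodic sequence. -/
def EventuallyPeriodic {A : Type*} (x : ℤ → A) : Prop :=
  ¬ IsPeriodicSeq x ∧ ∃ (i : ℤ) (n : ℕ), IsAnomalyOcc x i n

/-- The least period of an eventually periodic sequence `x`: the least period of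
`p(x;i,n)` over anomaly occurrences `(i,n)` of `x`. -/
noncomputable def evLeastPeriod {A : Type*} (x : ℤ → A) : ℕ :=
  sInf {N : ℕ | ∃ (i : ℤ) (n : ℕ), IsAnomalyOcc x i n ∧ IsPeriodicWith (removeBlock x i n) N}

/-- The anomaly size `a(x)`: the minimum of `n` over anomaly occurrences `(i,n)` of `x`. -/
noncomputable def anomalySize {A : Type*} (x : ℤ → A) : ℕ :=
  sInf {n : ℕ | ∃ i : ℤ, IsAnomalyOcc x i n}

/-- The orbit `{σ^k(x) : k ∈ ℤ}` of a bi-infinite sequence. -/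
def seqOrbit {A : Type*} (x : ℤ → A) : Set (ℤ → A) := {y | ∃ k : ℤ, y = shiftZ k x}

/-- The subshift generated by `x`: the closure of its orbit in the product topology. -/
def subshiftGen {A : Type*} [TopologicalSpace A] (x : ℤ → A) : Set (ℤ → A) :=
  closure (seqOrbit x)

/-- Two subshifts are conjugate if there is a homeomorphism between them commuting
with the shift. -/
def Conjugate {A B : Type*} [TopologicalSpace A] [TopologicalSpace B]
    (X : Set (ℤ → A)) (Y : Set (ℤ → B)) : Prop :=
  ∃ φ : X ≃ₜ Y, ∀ (u : ℤ → A) (hu : u ∈ X) (hu' : shiftMap u ∈ X),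
    ((φ ⟨shiftMap u, hu'⟩ : Y) : ℤ → B) = shiftMap ((φ ⟨u, hu⟩ : Y) : ℤ → B)

/-- The relation generating the suspension: `(x,s) ∼ (σ^n(x), s - n)`. -/
def SuspRel {A : Type*} (X : Set (ℤ → A)) : (X × ℝ) → (X × ℝ) → Prop :=
  fun p q => ∃ n : ℤ, (q.1 : ℤ → A) = shiftZ n (p.1 : ℤ → A) ∧ q.2 = p.2 - n

/-- The suspension `ΣX` of a subshift `X`. -/
def Susp {A : Type*} [TopologicalSpace A] (X : Set (ℤ → A)) : Type _ :=
  Quot (SuspRel X)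

instance {A : Type*} [TopologicalSpace A] (X : Set (ℤ → A)) : TopologicalSpace (Susp X) :=
  instTopologicalSpaceQuot

/-- The suspension flow `φ_t [x,s] = [x, s+t]`. -/
def suspFlow {A : Type*} [TopologicalSpace A] (X : Set (ℤ → A)) (t : ℝ) :
    Susp X → Susp X :=
  Quot.lift (fun p => Quot.mk _ (p.1, p.2 + t)) (by
    rintro p r ⟨n, h1, h2⟩
    exact Quot.sound ⟨n, h1, by rw [h2]; ring⟩)

/-- Two subshifts are flow equivalent if there is a homeomorphism of their suspensions
taking flow lines to flow lines in an orientation-preserving way. -/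
def FlowEquiv {A B : Type*} [TopologicalSpace A] [TopologicalSpace B]
    (X : Set (ℤ → A)) (Y : Set (ℤ → B)) : Prop :=
  ∃ h : Susp X ≃ₜ Susp Y, ∀ u : Susp X, ∃ τ : ℝ → ℝ,
    StrictMono τ ∧ Function.Bijective τ ∧ τ 0 = 0 ∧
      ∀ t : ℝ, h (suspFlow X t u) = suspFlow Y (τ t) (h u)

/-- Cell lengths `z_n` for the type-`S` skew Sturmian sequence `S(0, q/p)`, with `β = p/q`. -/
noncomputable def cellLenS (p q : ℤ) (n : ℤ) : ℕ :=
  if n < 0 then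
    ({k : ℤ | (n : ℚ) < (k : ℚ) * ((p : ℚ) / (q : ℚ)) ∧
        (k : ℚ) * ((p : ℚ) / (q : ℚ)) ≤ (n : ℚ) + 1}).ncard
  else if n = 0 then
    ({k : ℤ | 0 < (k : ℚ) * ((p : ℚ) / (q : ℚ)) ∧
        (k : ℚ) * ((p : ℚ) / (q : ℚ)) < 1}).ncard
  else
    ({k : ℤ | (n : ℚ) ≤ (k : ℚ) * ((p : ℚ) / (q : ℚ)) ∧
        (k : ℚ) * ((p : ℚ) / (q : ℚ)) < (n : ℚ) + 1}).ncard

/-- Cell lengths `z′_n` for the type-`S′` skew Sturmian sequence `S′(0, q/p)`, with `β = p/q`. -/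
noncomputable def cellLenS' (p q : ℤ) (n : ℤ) : ℕ :=
  if n < 0 then
    ({k : ℤ | (n : ℚ) ≤ (k : ℚ) * ((p : ℚ) / (q : ℚ)) ∧
        (k : ℚ) * ((p : ℚ) / (q : ℚ)) < (n : ℚ) + 1}).ncard
  else if n = 0 then
    ({k : ℤ | 0 ≤ (k : ℚ) * ((p : ℚ) / (q : ℚ)) ∧
        (k : ℚ) * ((p : ℚ) / (q : ℚ)) ≤ 1}).ncard
  else
    ({k : ℤ | (n : ℚ) < (k : ℚ) * ((p : ℚ) / (q : ℚ)) ∧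
        (k : ℚ) * ((p : ℚ) / (q : ℚ)) ≤ (n : ℚ) + 1}).ncard

/-- The position `L_n` of the leading `1` of the cell `B_n`. -/
noncomputable def cellStart (z : ℤ → ℕ) (n : ℤ) : ℤ :=
  if 0 ≤ n then n + ∑ j ∈ Finset.Ico (0 : ℤ) n, (z j : ℤ)
  else n - ∑ j ∈ Finset.Ico n (0 : ℤ), (z j : ℤ)

/-- The `{0,1}`-sequence determined by cell lengths `z`: a `1` at each position `L_n`
and `0` elsewhere. -/
noncomputable def seqOfCells (z : ℤ → ℕ) : ℤ → Fin 2 :=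
  fun i => if ∃ n : ℤ, i = cellStart z n then 1 else 0

/-- The type-`S` skew Sturmian sequence `S(0, q/p)`. -/
noncomputable def sturmS (p q : ℤ) : ℤ → Fin 2 := seqOfCells (cellLenS p q)

/-- The type-`S′` skew Sturmian sequence `S′(0, q/p)`. -/
noncomputable def sturmS' (p q : ℤ) : ℤ → Fin 2 := seqOfCells (cellLenS' p q)

section helpers
lemma my_ratle1 {p q a k : ℤ} (hq : 0 < q) :
    ((a:ℚ) ≤ (k:ℚ) * ((p:ℚ)/(q:ℚ))) ↔ a*q ≤ k*p := by
  rw [← mul_div_assoc, le_div_iff₀ (by exact_mod_cast hq : (0:ℚ) < (q:ℚ))]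
  norm_cast

lemma my_ratlt1 {p q a k : ℤ} (hq : 0 < q) :
    ((a:ℚ) < (k:ℚ) * ((p:ℚ)/(q:ℚ))) ↔ a*q < k*p := by
  rw [← mul_div_assoc, lt_div_iff₀ (by exact_mod_cast hq : (0:ℚ) < (q:ℚ))]
  norm_cast

lemma my_ratle2 {p q a k : ℤ} (hq : 0 < q) :
    ((k:ℚ) * ((p:ℚ)/(q:ℚ)) ≤ (a:ℚ)) ↔ k*p ≤ a*q := by
  rw [← mul_div_assoc, div_le_iff₀ (by exact_mod_cast hq : (0:ℚ) < (q:ℚ))]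
  norm_cast

lemma my_ratlt2 {p q a k : ℤ} (hq : 0 < q) :
    ((k:ℚ) * ((p:ℚ)/(q:ℚ)) < (a:ℚ)) ↔ k*p < a*q := by
  rw [← mul_div_assoc, div_lt_iff₀ (by exact_mod_cast hq : (0:ℚ) < (q:ℚ))]
  norm_cast

lemma my_le_ediv {a k p : ℤ} (hp : 0 < p) : k ≤ a / p ↔ k * p ≤ a :=
  Int.le_ediv_iff_mul_le hp

lemma my_ediv_lt {a k p : ℤ} (hp : 0 < p) : a / p < k ↔ a < k * p := by
  rw [← not_le, ← not_le, my_le_ediv hp]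

lemma my_ediv_eq_iff {a b p : ℤ} (hp : 0 < p) : b / p = a ↔ a * p ≤ b ∧ b < (a+1)*p := by
  constructor
  · intro h
    refine ⟨?_, ?_⟩
    · rw [← h]; exact (my_le_ediv hp).mp le_rfl
    · rw [← h]; exact (my_ediv_lt hp).mp (by omega)
  · rintro ⟨h1, h2⟩
    have g1 : a ≤ b / p := (my_le_ediv hp).mpr h1
    have g2 : b / p < a + 1 := (my_ediv_lt hp).mpr h2
    omega

lemma my_ncard_Ioc (a b : ℤ) : {k : ℤ | a < k ∧ k ≤ b}.ncard = (b - a).toNat := by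
  rw [show {k : ℤ | a < k ∧ k ≤ b} = ↑(Finset.Ioc a b) by ext k; simp,
    Set.ncard_coe_finset, Int.card_Ioc]

lemma my_neg_one_ediv {p : ℤ} (hp : 0 < p) : (-1:ℤ)/p = -1 :=
  (my_ediv_eq_iff hp).mpr (by constructor <;> omega)

lemma my_ediv_mono {a b p : ℤ} (hp : 0 < p) (h : a ≤ b) : a / p ≤ b / p :=
  Int.ediv_le_ediv hp h
end helpers

section cellLen
variable {p q : ℤ}

lemma cellLenS_neg (hp : 0 < p) (hq : 0 < q) {n : ℤ} (hn : n < 0) :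
    cellLenS p q n = ((n+1)*q/p - n*q/p).toNat := by
  unfold cellLenS
  rw [if_pos hn, ← my_ncard_Ioc]
  congr 1
  ext k
  simp only [Set.mem_setOf_eq]
  rw [show ((n:ℚ)+1) = (((n+1 : ℤ)):ℚ) by push_cast; ring,
    my_ratlt1 hq, my_ratle2 hq, ← my_ediv_lt hp, ← my_le_ediv hp]

lemma cellLenS_zero (hp : 0 < p) (hq : 0 < q) : cellLenS p q 0 = ((q-1)/p).toNat := by
  unfold cellLenS
  rw [if_neg (by omega), if_pos rfl]
  have hset : {k : ℤ | 0 < (k : ℚ) * ((p : ℚ) / (q : ℚ)) ∧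
      (k : ℚ) * ((p : ℚ) / (q : ℚ)) < 1} = {k : ℤ | 0 < k ∧ k ≤ (q-1)/p} := by
    ext k
    simp only [Set.mem_setOf_eq]
    rw [show (0:ℚ) = ((0:ℤ):ℚ) by norm_num, show (1:ℚ) = ((1:ℤ):ℚ) by norm_num,
      my_ratlt1 hq, my_ratlt2 hq]
    constructor
    · rintro ⟨h1, h2⟩
      have g1 : (0:ℤ)/p < k := (my_ediv_lt hp).mpr (by omega)
      rw [Int.zero_ediv] at g1
      exact ⟨g1, (my_le_ediv hp).mpr (by omega)⟩
    · rintro ⟨h1, h2⟩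
      have g2 := (my_le_ediv hp).mp h2
      have g1 : (0:ℤ) < k*p := (my_ediv_lt hp).mp (by rw [Int.zero_ediv]; exact h1)
      omega
  rw [hset, my_ncard_Ioc]
  congr 1
  omega

lemma cellLenS_pos (hp : 0 < p) (hq : 0 < q) {n : ℤ} (hn : 0 < n) :
    cellLenS p q n = (((n+1)*q-1)/p - (n*q-1)/p).toNat := by
  unfold cellLenS
  rw [if_neg (by omega), if_neg (by omega), ← my_ncard_Ioc]
  congr 1
  ext k
  simp only [Set.mem_setOf_eq]
  rw [show ((n:ℚ)+1) = (((n+1 : ℤ)):ℚ) by push_cast; ring,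
    my_ratle1 hq, my_ratlt2 hq]
  constructor
  · rintro ⟨h1, h2⟩
    exact ⟨(my_ediv_lt hp).mpr (by omega), (my_le_ediv hp).mpr (by omega)⟩
  · rintro ⟨h1, h2⟩
    have := (my_ediv_lt hp).mp h1
    have := (my_le_ediv hp).mp h2
    omega

lemma cellLenS'_neg (hp : 0 < p) (hq : 0 < q) {n : ℤ} (hn : n < 0) :
    cellLenS' p q n = (((n+1)*q-1)/p - (n*q-1)/p).toNat := by
  unfold cellLenS'
  rw [if_pos hn, ← my_ncard_Ioc]
  congr 1
  ext k
  simp only [Set.mem_setOf_eq]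
  rw [show ((n:ℚ)+1) = (((n+1 : ℤ)):ℚ) by push_cast; ring,
    my_ratle1 hq, my_ratlt2 hq]
  constructor
  · rintro ⟨h1, h2⟩
    exact ⟨(my_ediv_lt hp).mpr (by omega), (my_le_ediv hp).mpr (by omega)⟩
  · rintro ⟨h1, h2⟩
    have := (my_ediv_lt hp).mp h1
    have := (my_le_ediv hp).mp h2
    omega

lemma cellLenS'_zero (hp : 0 < p) (hq : 0 < q) : cellLenS' p q 0 = (q/p + 1).toNat := by
  unfold cellLenS'
  rw [if_neg (by omega), if_pos rfl]
  have hset : {k : ℤ | 0 ≤ (k : ℚ) * ((p : ℚ) / (q : ℚ)) ∧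
      (k : ℚ) * ((p : ℚ) / (q : ℚ)) ≤ 1} = {k : ℤ | -1 < k ∧ k ≤ q/p} := by
    ext k
    simp only [Set.mem_setOf_eq]
    rw [show (0:ℚ) = ((0:ℤ):ℚ) by norm_num, show (1:ℚ) = ((1:ℤ):ℚ) by norm_num,
      my_ratle1 hq, my_ratle2 hq]
    constructor
    · rintro ⟨h1, h2⟩
      have g1 : (-1:ℤ)/p < k := (my_ediv_lt hp).mpr (by omega)
      rw [my_neg_one_ediv hp] at g1
      exact ⟨g1, (my_le_ediv hp).mpr (by omega)⟩
    · rintro ⟨h1, h2⟩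
      have g1 : (-1:ℤ) < k*p := (my_ediv_lt hp).mp (by rw [my_neg_one_ediv hp]; exact h1)
      have g2 := (my_le_ediv hp).mp h2
      omega
  rw [hset, my_ncard_Ioc]
  congr 1

lemma cellLenS'_pos (hp : 0 < p) (hq : 0 < q) {n : ℤ} (hn : 0 < n) :
    cellLenS' p q n = ((n+1)*q/p - n*q/p).toNat := by
  unfold cellLenS'
  rw [if_neg (by omega), if_neg (by omega), ← my_ncard_Ioc]
  congr 1
  ext k
  simp only [Set.mem_setOf_eq]
  rw [show ((n:ℚ)+1) = (((n+1 : ℤ)):ℚ) by push_cast; ring,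
    my_ratlt1 hq, my_ratle2 hq, ← my_ediv_lt hp, ← my_le_ediv hp]

end cellLen

section cellStartSec
variable {p q : ℤ}

lemma my_sum_top (f : ℤ → ℤ) {a b : ℤ} (h : a ≤ b) :
    ∑ j ∈ Finset.Ico a (b+1), f j = (∑ j ∈ Finset.Ico a b, f j) + f b := by
  rw [show Finset.Ico a (b+1) = insert b (Finset.Ico a b) by
      ext x; simp only [Finset.mem_Ico, Finset.mem_insert]; omega,
    Finset.sum_insert (by simp [Finset.mem_Ico])]
  ring

lemma my_sum_bot (f : ℤ → ℤ) {a b : ℤ} (h : a - 1 < b) :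
    ∑ j ∈ Finset.Ico (a-1) b, f j = f (a-1) + ∑ j ∈ Finset.Ico a b, f j := by
  rw [show Finset.Ico (a-1) b = insert (a-1) (Finset.Ico a b) by
      ext x; simp only [Finset.mem_Ico, Finset.mem_insert]; omega,
    Finset.sum_insert (by simp [Finset.mem_Ico])]

lemma cellStart_zero (z : ℤ → ℕ) : cellStart z 0 = 0 := by simp [cellStart]

lemma cellStart_succ (z : ℤ → ℕ) {n : ℤ} (hn : 0 ≤ n) :
    cellStart z (n+1) = cellStart z n + 1 + z n := by
  unfold cellStart
  rw [if_pos (by omega : (0:ℤ) ≤ n + 1), if_pos hn, my_sum_top _ hn]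
  ring

lemma cellStart_pred (z : ℤ → ℕ) {n : ℤ} (hn : n ≤ 0) :
    cellStart z (n-1) = cellStart z n - 1 - z (n-1) := by
  unfold cellStart
  rw [if_neg (by omega : ¬ (0:ℤ) ≤ n - 1), my_sum_bot _ (by omega : n - 1 < 0)]
  rcases eq_or_lt_of_le hn with h | h
  · subst h
    simp
  · rw [if_neg (by omega)]
    ring

lemma cellStartS_pos (hp : 0 < p) (hq : 0 < q) :
    ∀ n : ℤ, 1 ≤ n → cellStart (cellLenS p q) n = n + (n*q - 1)/p := by
  refine Int.le_induction ?_ ?_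
  ·
    rw [show (1:ℤ) = 0 + 1 by ring, cellStart_succ _ le_rfl, cellStart_zero,
      cellLenS_zero hp hq]
    have h1 : (0:ℤ) ≤ (q-1)/p := Int.ediv_nonneg (by omega) (by omega)
    rw [Int.toNat_of_nonneg h1]
    rw [show ((0:ℤ)+1)*q - (0+1) = q - 1 by ring]
  · intro n hn ih
    rw [cellStart_succ _ (by omega), ih, cellLenS_pos hp hq (by omega)]
    have hm : (n*q - 1)/p ≤ ((n+1)*q - 1)/p :=
      my_ediv_mono hp (by nlinarith)
    rw [Int.toNat_of_nonneg (by omega)]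
    omega

lemma cellStartS_neg (hp : 0 < p) (hq : 0 < q) :
    ∀ n : ℤ, n ≤ -1 → cellStart (cellLenS p q) n = n + (n*q)/p := by
  refine Int.le_induction_down ?_ ?_
  ·
    rw [show (-1:ℤ) = 0 - 1 by ring, cellStart_pred _ le_rfl, cellStart_zero,
      cellLenS_neg hp hq (by omega)]
    have hm : (0-1)*q/p ≤ ((0-1)+1)*q/p := my_ediv_mono hp (by nlinarith)
    rw [Int.toNat_of_nonneg (by omega)]
    have h0 : ((0-1:ℤ)+1)*q = 0 := by ring
    rw [h0, Int.zero_ediv]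
    have h1 : ((0:ℤ)-1)*q = (-1)*q := by ring
    rw [h1]
    omega
  · intro n hn ih
    rw [cellStart_pred _ (by omega), ih, cellLenS_neg hp hq (by omega)]
    have hm : (n-1)*q/p ≤ ((n-1)+1)*q/p := my_ediv_mono hp (by nlinarith)
    rw [Int.toNat_of_nonneg (by omega)]
    have h0 : ((n-1:ℤ)+1)*q = n*q := by ring
    rw [h0]
    omega

lemma cellStartS'_pos (hp : 0 < p) (hq : 0 < q) :
    ∀ n : ℤ, 1 ≤ n → cellStart (cellLenS' q p) n = n + (n*p)/q + 1 := by
  refine Int.le_induction ?_ ?_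
  ·
    rw [show (1:ℤ) = 0 + 1 by ring, cellStart_succ _ le_rfl, cellStart_zero,
      cellLenS'_zero hq hp]
    have h1 : (0:ℤ) ≤ p/q := Int.ediv_nonneg (by omega) (by omega)
    rw [Int.toNat_of_nonneg (by omega)]
    have : (0+1:ℤ)*p = p := by ring
    rw [this]
    omega
  · intro n hn ih
    rw [cellStart_succ _ (by omega), ih, cellLenS'_pos hq hp (by omega)]
    have hm : (n*p)/q ≤ ((n+1)*p)/q :=
      my_ediv_mono hq (by nlinarith)
    rw [Int.toNat_of_nonneg (by omega)]
    omega

lemma cellStartS'_neg (hp : 0 < p) (hq : 0 < q) :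
    ∀ n : ℤ, n ≤ -1 → cellStart (cellLenS' q p) n = n + (n*p - 1)/q + 1 := by
  refine Int.le_induction_down ?_ ?_
  ·
    rw [show (-1:ℤ) = 0 - 1 by ring, cellStart_pred _ le_rfl, cellStart_zero,
      cellLenS'_neg hq hp (by omega)]
    have hm : ((0-1)*p-1)/q ≤ (((0-1)+1)*p-1)/q := my_ediv_mono hq (by nlinarith)
    rw [Int.toNat_of_nonneg (by omega)]
    have h0 : (((0-1:ℤ))+1)*p - 1 = -1 := by ring
    rw [h0, my_neg_one_ediv hq]
    have h1 : ((0:ℤ)-1)*p - 1 = (-1)*p - 1 := by ring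
    rw [h1]
    omega
  · intro n hn ih
    rw [cellStart_pred _ (by omega), ih, cellLenS'_neg hq hp (by omega)]
    have hm : ((n-1)*p-1)/q ≤ (((n-1)+1)*p-1)/q := my_ediv_mono hq (by nlinarith)
    rw [Int.toNat_of_nonneg (by omega)]
    have h0 : (((n-1:ℤ))+1)*p - 1 = n*p - 1 := by ring
    rw [h0]
    omega

end cellStartSec

section partition
variable {p q : ℤ}

lemma my_mul_lt_cancel {a b N : ℤ} (hN : 0 < N) (h : a*N < b*N) : a < b :=
  lt_of_mul_lt_mul_right h hN.le

lemma my_mul_le_cancel {a b N : ℤ} (hN : 0 < N) (h : a*N ≤ b*N) : a ≤ b :=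
  le_of_mul_le_mul_right h hN

/-- Existence part: every `i` is in `A` or `B`. -/
lemma my_partition_ex (hp : 0 < p) (hq : 0 < q) (i : ℤ) :
    (i = 1 ∨ (∃ n, 1 ≤ n ∧ (i-1)*p < n*(p+q) ∧ n*(p+q) ≤ i*p)
        ∨ (∃ n, n ≤ -1 ∧ (i-1)*p ≤ n*(p+q) ∧ n*(p+q) < i*p)) ∨
    (i = 0 ∨ (∃ n, 1 ≤ n ∧ (i-1)*q ≤ n*(p+q) ∧ n*(p+q) < i*q)
        ∨ (∃ n, n ≤ -1 ∧ (i-1)*q < n*(p+q) ∧ n*(p+q) ≤ i*q)) := by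
  have hN0 : 0 < p + q := by omega
  obtain ⟨k, r, hkr, hr0, hrN⟩ : ∃ k r : ℤ, i*p = k*(p+q) + r ∧ 0 ≤ r ∧ r < p+q := by
    refine ⟨i*p / (p+q), i*p % (p+q), ?_, Int.emod_nonneg _ (by omega),
      Int.emod_lt_of_pos _ hN0⟩
    linear_combination -Int.mul_ediv_add_emod (i*p) (p+q)
  rcases le_or_gt i 0 with hi | hi
  · rcases eq_or_lt_of_le hi with hi0 | hineg
    · exact Or.inr (Or.inl (by omega))
    · -- i ≤ -1
      have hip : i*p ≤ -p := by nlinarith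
      rcases le_or_gt r 0 with hr | hr
      · -- r = 0 : B_neg with n = i - k
        have hr' : r = 0 := by omega
        refine Or.inr (Or.inr (Or.inr ⟨i - k, ?_, ?_, ?_⟩))
        · -- i - k ≤ -1 : (i-k)*(p+q) = i*q < 0
          have he : (i-k)*(p+q) = i*q := by nlinarith [hkr]
          have hiq : i*q ≤ -q := by nlinarith
          nlinarith [he, hiq]
        · have he : (i-k)*(p+q) = i*q := by nlinarith [hkr]
          nlinarith [he]
        · have he : (i-k)*(p+q) = i*q := by nlinarith [hkr]
          nlinarith [he]
      · rcases le_or_gt r p with hrp | hrp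
        · -- 1 ≤ r ≤ p : A_neg with n = k
          refine Or.inl (Or.inr (Or.inr ⟨k, ?_, ?_, ?_⟩))
          · -- k ≤ -1 : k*N = i*p - r < 0
            nlinarith [hkr]
          · nlinarith [hkr]
          · nlinarith [hkr]
        · -- p < r : B_neg with n = i - k - 1, n*N = i*q - (N - r)
          have he : (i-k-1)*(p+q) = i*q - (p+q-r) := by nlinarith [hkr]
          refine Or.inr (Or.inr (Or.inr ⟨i - k - 1, ?_, ?_, ?_⟩))
          · have hiq : i*q ≤ -q := by nlinarith
            nlinarith [he]
          · nlinarith [he]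
          · nlinarith [he]
  · -- 1 ≤ i
    rcases eq_or_lt_of_le (by omega : (1:ℤ) ≤ i) with hi1 | hi2
    · exact Or.inl (Or.inl hi1.symm)
    · -- 2 ≤ i
      have hip : 2*p ≤ i*p := by nlinarith
      rcases lt_or_ge r p with hrp | hrp
      · -- r < p : A_pos with n = k
        refine Or.inl (Or.inr (Or.inl ⟨k, ?_, ?_, ?_⟩))
        · -- 1 ≤ k : k*N = i*p - r ≥ 2p - p + 1 > 0
          nlinarith [hkr]
        · nlinarith [hkr]
        · nlinarith [hkr]
      · -- p ≤ r : B_pos with n = i - k - 1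
        have he : (i-k-1)*(p+q) = i*q - (p+q-r) := by nlinarith [hkr]
        have hiq : 2*q ≤ i*q := by nlinarith
        refine Or.inr (Or.inr (Or.inl ⟨i - k - 1, ?_, ?_, ?_⟩))
        · nlinarith [he]
        · nlinarith [he]
        · nlinarith [he]

/-- Disjointness part. -/
lemma my_partition_disj (hp : 0 < p) (hq : 0 < q) (i : ℤ)
    (hA : i = 1 ∨ (∃ n, 1 ≤ n ∧ (i-1)*p < n*(p+q) ∧ n*(p+q) ≤ i*p)
        ∨ (∃ n, n ≤ -1 ∧ (i-1)*p ≤ n*(p+q) ∧ n*(p+q) < i*p))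
    (hB : i = 0 ∨ (∃ n, 1 ≤ n ∧ (i-1)*q ≤ n*(p+q) ∧ n*(p+q) < i*q)
        ∨ (∃ n, n ≤ -1 ∧ (i-1)*q < n*(p+q) ∧ n*(p+q) ≤ i*q)) : False := by
  have hN0 : 0 < p + q := by omega
  rcases hA with hA1 | ⟨n₁, hn₁, ha1, ha2⟩ | ⟨n₁, hn₁, ha1, ha2⟩ <;>
    rcases hB with hB1 | ⟨n₂, hn₂, hb1, hb2⟩ | ⟨n₂, hn₂, hb1, hb2⟩
  · omega
  · -- i = 1, B_pos: 0 ≤ n₂N < q, n₂ ≥ 1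
    subst hA1
    nlinarith [hb1, hb2]
  · subst hA1
    nlinarith [hb1, hb2]
  · subst hB1
    nlinarith [ha1, ha2]
  · -- A_pos & B_pos
    have h1 : (i-1)*(p+q) < (n₁+n₂)*(p+q) := by nlinarith
    have h2 : (n₁+n₂)*(p+q) < i*(p+q) := by nlinarith
    have := my_mul_lt_cancel hN0 h1
    have := my_mul_lt_cancel hN0 h2
    omega
  · -- A_pos & B_neg
    have h1 : (i-1)*(p+q) < (n₁+n₂)*(p+q) := by nlinarith
    have h2 : (n₁+n₂)*(p+q) ≤ i*(p+q) := by nlinarith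
    have g1 := my_mul_lt_cancel hN0 h1
    have g2 := my_mul_le_cancel hN0 h2
    have hni : n₁ + n₂ = i := by omega
    -- then n₁*(p+q) = i*p and n₂*(p+q) = i*q
    have he : (n₁+n₂)*(p+q) = i*(p+q) := by rw [hni]
    have e1 : n₁*(p+q) = i*p := by nlinarith
    have e2 : n₂*(p+q) = i*q := by nlinarith
    -- n₁ ≥ 1 ⇒ i*p ≥ N > 0 ⇒ i ≥ 1 ; n₂ ≤ -1 ⇒ i*q ≤ -N < 0 ⇒ i ≤ -1
    have hip : 0 < i*p := by nlinarith
    have hiq : i*q < 0 := by nlinarith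
    nlinarith [hip, hiq]
  · subst hB1
    nlinarith [ha1, ha2]
  · -- A_neg & B_pos
    have h1 : (i-1)*(p+q) ≤ (n₁+n₂)*(p+q) := by nlinarith
    have h2 : (n₁+n₂)*(p+q) < i*(p+q) := by nlinarith
    have g1 := my_mul_le_cancel hN0 h1
    have g2 := my_mul_lt_cancel hN0 h2
    have hni : n₁ + n₂ = i - 1 := by omega
    have he : (n₁+n₂)*(p+q) = (i-1)*(p+q) := by rw [hni]
    have e1 : n₁*(p+q) = (i-1)*p := by nlinarith
    have e2 : n₂*(p+q) = (i-1)*q := by nlinarith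
    have hip : (i-1)*p < 0 := by nlinarith
    have hiq : 0 < (i-1)*q := by nlinarith
    nlinarith [hip, hiq]
  · -- A_neg & B_neg
    have h1 : (i-1)*(p+q) < (n₁+n₂)*(p+q) := by nlinarith
    have h2 : (n₁+n₂)*(p+q) < i*(p+q) := by nlinarith
    have := my_mul_lt_cancel hN0 h1
    have := my_mul_lt_cancel hN0 h2
    omega

end partition


section memiff
variable {p q : ℤ}

lemma my_memA_iff (hp : 0 < p) (hq : 0 < q) (i : ℤ) :
    (∃ n : ℤ, i - 1 = cellStart (cellLenS p q) n) ↔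
      (i = 1 ∨ (∃ n, 1 ≤ n ∧ (i-1)*p < n*(p+q) ∧ n*(p+q) ≤ i*p)
        ∨ (∃ n, n ≤ -1 ∧ (i-1)*p ≤ n*(p+q) ∧ n*(p+q) < i*p)) := by
  constructor
  · rintro ⟨n, h⟩
    rcases lt_trichotomy n 0 with hn | hn | hn
    · right; right
      rw [cellStartS_neg hp hq n (by omega)] at h
      have h2 : (n*q)/p = i - 1 - n := by linarith
      obtain ⟨g1, g2⟩ := (my_ediv_eq_iff hp).mp h2
      exact ⟨n, by omega, by linarith, by linarith⟩
    · left; subst hn; rw [cellStart_zero] at h; omega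
    · right; left
      rw [cellStartS_pos hp hq n (by omega)] at h
      have h2 : (n*q - 1)/p = i - 1 - n := by linarith
      obtain ⟨g1, g2⟩ := (my_ediv_eq_iff hp).mp h2
      exact ⟨n, by omega, by linarith, by linarith⟩
  · rintro (h | ⟨n, hn, h1, h2⟩ | ⟨n, hn, h1, h2⟩)
    · exact ⟨0, by rw [cellStart_zero]; omega⟩
    · refine ⟨n, ?_⟩
      rw [cellStartS_pos hp hq n hn]
      have h2' : (n*q - 1)/p = i - 1 - n :=
        (my_ediv_eq_iff hp).mpr ⟨by linarith, by linarith⟩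
      linarith
    · refine ⟨n, ?_⟩
      rw [cellStartS_neg hp hq n hn]
      have h2' : (n*q)/p = i - 1 - n :=
        (my_ediv_eq_iff hp).mpr ⟨by linarith, by linarith⟩
      linarith

lemma my_memB_iff (hp : 0 < p) (hq : 0 < q) (i : ℤ) :
    (∃ n : ℤ, i = cellStart (cellLenS' q p) n) ↔
      (i = 0 ∨ (∃ n, 1 ≤ n ∧ (i-1)*q ≤ n*(p+q) ∧ n*(p+q) < i*q)
        ∨ (∃ n, n ≤ -1 ∧ (i-1)*q < n*(p+q) ∧ n*(p+q) ≤ i*q)) := by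
  constructor
  · rintro ⟨n, h⟩
    rcases lt_trichotomy n 0 with hn | hn | hn
    · right; right
      rw [cellStartS'_neg hp hq n (by omega)] at h
      have h2 : (n*p - 1)/q = i - 1 - n := by linarith
      obtain ⟨g1, g2⟩ := (my_ediv_eq_iff hq).mp h2
      exact ⟨n, by omega, by linarith, by linarith⟩
    · left; subst hn; rw [cellStart_zero] at h; omega
    · right; left
      rw [cellStartS'_pos hp hq n (by omega)] at h
      have h2 : (n*p)/q = i - 1 - n := by linarith
      obtain ⟨g1, g2⟩ := (my_ediv_eq_iff hq).mp h2
      exact ⟨n, by omega, by linarith, by linarith⟩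
  · rintro (h | ⟨n, hn, h1, h2⟩ | ⟨n, hn, h1, h2⟩)
    · exact ⟨0, by rw [cellStart_zero]; omega⟩
    · refine ⟨n, ?_⟩
      rw [cellStartS'_pos hp hq n hn]
      have h2' : (n*p)/q = i - 1 - n :=
        (my_ediv_eq_iff hq).mpr ⟨by linarith, by linarith⟩
      linarith
    · refine ⟨n, ?_⟩
      rw [cellStartS'_neg hp hq n hn]
      have h2' : (n*p - 1)/q = i - 1 - n :=
        (my_ediv_eq_iff hq).mpr ⟨by linarith, by linarith⟩
      linarith

lemma my_key (hp : 0 < p) (hq : 0 < q) (i : ℤ) :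
    (∃ n : ℤ, i = cellStart (cellLenS' q p) n) ↔
      ¬ (∃ n : ℤ, i - 1 = cellStart (cellLenS p q) n) := by
  rw [my_memA_iff hp hq, my_memB_iff hp hq]
  constructor
  · intro hB hA
    exact my_partition_disj hp hq i hA hB
  · intro hA
    rcases my_partition_ex hp hq i with h | h
    · exact absurd h hA
    · exact h

end memiff

noncomputable def myFlip2 : (Fin 2) ≃ₜ (Fin 2) where
  toEquiv := Equiv.swap (0 : Fin 2) 1
  continuous_toFun := continuous_of_discreteTopology
  continuous_invFun := continuous_of_discreteTopology

noncomputable def myFlipHomeo : (ℤ → Fin 2) ≃ₜ (ℤ → Fin 2) :=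
  Homeomorph.piCongrRight (fun _ => myFlip2)

lemma my_shiftZ_add {A : Type*} (a b : ℤ) (x : ℤ → A) :
    shiftZ a (shiftZ b x) = shiftZ (a+b) x := by
  funext i
  show x ((i + a) + b) = x (i + (a + b))
  rw [add_assoc]

lemma my_flip_shiftZ (k : ℤ) (x : ℤ → Fin 2) :
    myFlipHomeo (shiftZ k x) = shiftZ k (myFlipHomeo x) := rfl

lemma my_flip_seq {p q : ℤ} (hp : 0 < p) (hq : 0 < q) :
    sturmS' q p = myFlipHomeo (shiftZ (-1) (sturmS p q)) := by
  funext i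
  show seqOfCells (cellLenS' q p) i
      = Equiv.swap (0 : Fin 2) 1 (seqOfCells (cellLenS p q) (i + -1))
  unfold seqOfCells
  rw [show i + -1 = i - 1 by omega]
  by_cases h : ∃ n : ℤ, i = cellStart (cellLenS' q p) n
  · rw [if_pos h, if_neg ((my_key hp hq i).mp h)]
    simp
  · have hA : ∃ n : ℤ, i - 1 = cellStart (cellLenS p q) n := by
      by_contra hA'
      exact h ((my_key hp hq i).mpr hA')
    rw [if_neg h, if_pos hA]
    simp


/-- The subshift generated by the type-`S` sequence `S(0,q/p)` is conjugate
to the subshift generated by the type-`S′` sequence `S′(0,p/q)`. -/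
theorem stmt_14 (p q : ℤ) (hp : 0 < p) (hq : 0 < q) (hpq : IsCoprime p q) :
    Conjugate (subshiftGen (sturmS p q)) (subshiftGen (sturmS' q p)) := by
  have hyx : sturmS' q p = myFlipHomeo (shiftZ (-1) (sturmS p q)) := my_flip_seq hp hq
  set x := sturmS p q
  set y := sturmS' q p
  have horb : seqOrbit y = myFlipHomeo '' (seqOrbit x) := by
    ext z
    constructor
    · rintro ⟨k, rfl⟩
      refine ⟨shiftZ (k + -1) x, ⟨k + -1, rfl⟩, ?_⟩
      rw [hyx, my_flip_shiftZ, my_flip_shiftZ, my_shiftZ_add]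
    · rintro ⟨z', ⟨k, rfl⟩, rfl⟩
      refine ⟨k + 1, ?_⟩
      rw [hyx, my_flip_shiftZ, my_flip_shiftZ, my_shiftZ_add,
        show k + 1 + -1 = k by omega]
  have hgen : subshiftGen y = myFlipHomeo '' subshiftGen x := by
    unfold subshiftGen
    rw [horb, Homeomorph.image_closure]
  refine ⟨(myFlipHomeo.image (subshiftGen x)).trans (Homeomorph.setCongr hgen.symm), ?_⟩
  intro u hu hu'
  rfl
end

section
/- Let p and q be relatively prime positive integers and let c be a nonzero integer such that q−c and p+c are also relatively prime positive integers. Let (a,b) be the restricted Bézout coefficients of (q,p) and let (e,f) be the restricted Bézout coefficients of (q−c, p+c). Then a+b ≠ e+f. Consequently, the anomaly sizes of the type-S skew Sturmian sequences S(0,q/p) and S(0,(q−c)/(p+c)) are different, and the anomaly sizes of the type-S′ skew Sturmian sequences S′(0,q/p) and S′(0,(q−c)/(p+c)) are different. -/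
open Classical

set_option linter.unusedSectionVars false
set_option linter.deprecated false

namespace Stmt15

private lemma ediv_eq_iff' {a b k : ℤ} (hb : 0 < b) :
    a / b = k ↔ k * b ≤ a ∧ a < (k + 1) * b := by
  constructor
  · rintro rfl
    exact ⟨(Int.le_ediv_iff_mul_le hb).mp le_rfl, (Int.ediv_lt_iff_lt_mul hb).mp (lt_add_one _)⟩
  · rintro ⟨h1, h2⟩
    have h1' := (Int.le_ediv_iff_mul_le hb).mpr h1
    have h2' := (Int.ediv_lt_iff_lt_mul hb).mpr h2
    exact le_antisymm (Int.lt_add_one_iff.mp h2') h1'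

private lemma emod_eq_of {T a r : ℤ} (h : T ∣ a - r) (h0 : 0 ≤ r) (h1 : r < T) :
    a % T = r := by
  obtain ⟨m, hm⟩ := h
  have ha : a = r + T * m := by linarith
  rw [ha, Int.add_mul_emod_self_left, Int.emod_eq_of_lt h0 h1]

private lemma emod_congr {T a b : ℤ} (h : T ∣ a - b) : a % T = b % T := by
  obtain ⟨m, hm⟩ := h
  have ha : a = b + T * m := by linarith
  rw [ha, Int.add_mul_emod_self_left]

private lemma neg_one_ediv {p : ℤ} (hp : 0 < p) : (-1 : ℤ) / p = -1 :=
  (ediv_eq_iff' hp).mpr ⟨by linarith, by linarith⟩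

/-- The basic periodic Sturmian pattern. -/
noncomputable def pat (p T k : ℤ) : Fin 2 := if (k * p) % T < p then 1 else 0

private lemma pat_congr {p T k k' : ℤ} (h : (k' * p) % T = (k * p) % T) :
    pat p T k' = pat p T k := by
  unfold pat; rw [h]

private lemma ite_one_zero_inj {A B : Prop} [Decidable A] [Decidable B]
    (h : (if A then (1 : Fin 2) else 0) = (if B then 1 else 0)) : A ↔ B := by
  constructor
  · intro hA
    by_contra hB
    rw [if_pos hA, if_neg hB] at h
    exact absurd h (by decide)
  · intro hB
    by_contra hA
    rw [if_neg hA, if_pos hB] at h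
    exact absurd h (by decide)

private lemma periodic_shift {y : ℤ → Fin 2} {N : ℤ}
    (h : ∀ k : ℤ, y (k + N) = y k) : ∀ (j k : ℤ), y (k + j * N) = y k := by
  intro j
  induction j using Int.induction_on with
  | zero => intro k; rw [show k + 0 * N = k by ring]
  | succ j ih =>
    intro k
    have e : k + ((j : ℤ) + 1) * N = (k + N) + (j : ℤ) * N := by ring
    rw [e, ih, h]
  | pred j ih =>
    intro k
    have h2 := h (k + (-(j : ℤ) - 1) * N)
    have e : k + (-(j : ℤ) - 1) * N + N = k + (-(j : ℤ)) * N := by ring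
    rw [e] at h2
    rw [← h2, ih]

private lemma rot_aux {p q : ℤ} (hp : 0 < p) (hq : 0 < q) {c : ℤ} (hc0 : 0 ≤ c)
    (hcT : c < p + q)
    (H : ∀ r : ℤ, r % (p + q) < p ↔ (r + c) % (p + q) < p) : c = 0 := by
  by_contra hc
  have hcpos : 0 < c := by omega
  have hT : 0 < p + q := by omega
  have key : ∀ j : ℤ, (j * c) % (p + q) < p ∧ ¬ ((p + j * c) % (p + q) < p) := by
    intro j
    induction j using Int.induction_on with
    | zero =>
      constructor
      · rw [show (0 : ℤ) * c = 0 by ring, Int.zero_emod]; exact hp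
      · rw [show p + (0 : ℤ) * c = p by ring, Int.emod_eq_of_lt hp.le (by omega)]; omega
    | succ j ih =>
      obtain ⟨ih1, ih2⟩ := ih
      constructor
      · have h2 := (H ((j : ℤ) * c)).mp ih1
        rw [show (j : ℤ) * c + c = ((j : ℤ) + 1) * c by ring] at h2
        exact h2
      · intro hcon
        apply ih2
        apply (H (p + (j : ℤ) * c)).mpr
        rw [show p + (j : ℤ) * c + c = p + ((j : ℤ) + 1) * c by ring]
        exact hcon
    | pred j ih =>
      obtain ⟨ih1, ih2⟩ := ih
      constructor
      · apply (H ((-(j : ℤ) - 1) * c)).mpr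
        rw [show (-(j : ℤ) - 1) * c + c = (-(j : ℤ)) * c by ring]
        exact ih1
      · intro hcon
        apply ih2
        have h2 := (H (p + (-(j : ℤ) - 1) * c)).mp hcon
        rw [show p + (-(j : ℤ) - 1) * c + c = p + (-(j : ℤ)) * c by ring] at h2
        exact h2
  set g : ℤ := (Int.gcd c (p + q) : ℤ) with hgdef
  have hgpos : 0 < g := by
    rw [hgdef]
    exact_mod_cast Int.gcd_pos_of_ne_zero_left (p + q) hc
  have hgc : g ∣ c := Int.gcd_dvd_left c (p + q)
  have hgT : g ∣ (p + q) := Int.gcd_dvd_right c (p + q)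
  have hgle : g ≤ c := Int.le_of_dvd hcpos hgc
  have hbez : g = c * Int.gcdA c (p + q) + (p + q) * Int.gcdB c (p + q) :=
    Int.gcd_eq_gcd_ab c (p + q)
  have k1 := (key (-Int.gcdA c (p + q))).1
  have k2 := (key (-Int.gcdA c (p + q))).2
  have e1 : ((-Int.gcdA c (p + q)) * c) % (p + q) = (p + q) - g :=
    emod_eq_of ⟨Int.gcdB c (p + q) - 1, by linear_combination hbez⟩ (by omega) (by omega)
  rw [e1] at k1
  -- so q < g
  by_cases hgp : g ≤ p
  · have e2 : (p + (-Int.gcdA c (p + q)) * c) % (p + q) = p - g :=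
      emod_eq_of ⟨Int.gcdB c (p + q), by linear_combination hbez⟩ (by omega) (by omega)
    rw [e2] at k2
    omega
  · push_neg at hgp
    obtain ⟨m, hmT⟩ := hgT
    have hm2 : 2 ≤ m := by nlinarith
    nlinarith

private lemma pat_rigid {p q a b : ℤ} (hp : 0 < p) (hq : 0 < q)
    (hab : b * q - a * p = 1) {s : ℤ}
    (H : ∀ k : ℤ, pat p (p + q) (k + s) = pat p (p + q) k) : (p + q) ∣ s := by
  have hT : 0 < p + q := by omega
  have Hr : ∀ r : ℤ, r % (p + q) < p ↔ (r + s * p) % (p + q) < p := by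
    intro r
    have hk := H (-(r * (a + b)))
    unfold pat at hk
    have e1 : ((-(r * (a + b))) * p) % (p + q) = r % (p + q) :=
      emod_congr ⟨-(r * b), by linear_combination r * hab⟩
    have e2 : ((-(r * (a + b)) + s) * p) % (p + q) = (r + s * p) % (p + q) :=
      emod_congr ⟨-(r * b), by linear_combination r * hab⟩
    rw [e1, e2] at hk
    exact (ite_one_zero_inj hk).symm
  have hc0 : 0 ≤ (s * p) % (p + q) := Int.emod_nonneg _ (by omega)
  have hcT : (s * p) % (p + q) < p + q := Int.emod_lt_of_pos _ hT
  have Hr' : ∀ r : ℤ, r % (p + q) < p ↔ (r + (s * p) % (p + q)) % (p + q) < p := by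
    intro r
    rw [Hr r, show (r + s * p) % (p + q) = (r + (s * p) % (p + q)) % (p + q) from
      emod_congr ⟨s * p / (p + q), by linear_combination -Int.mul_ediv_add_emod (s * p) (p + q)⟩]
  have hc := rot_aux hp hq hc0 hcT Hr'
  have hdvd : (p + q) ∣ s * p := Int.dvd_of_emod_eq_zero hc
  have hcop : IsCoprime (p + q) p := ⟨b, -(a + b), by linear_combination hab⟩
  exact hcop.dvd_of_dvd_mul_right hdvd


private lemma sum_Ico_bot (f : ℤ → ℤ) {a b : ℤ} (h : a < b) :
    (∑ i ∈ Finset.Ico a b, f i) = f a + ∑ i ∈ Finset.Ico (a + 1) b, f i := by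
  have h1 : Finset.Ico (a + 1) b = Finset.Ioo a b := by
    ext x; simp only [Finset.mem_Ico, Finset.mem_Ioo]; omega
  rw [h1, ← Finset.Ioo_insert_left h, Finset.sum_insert (by simp)]

private lemma sum_Ico_top (f : ℤ → ℤ) {a b : ℤ} (h : a ≤ b) :
    (∑ i ∈ Finset.Ico a (b + 1), f i) = (∑ i ∈ Finset.Ico a b, f i) + f b := by
  have h1 : Finset.Ico a (b + 1) = insert b (Finset.Ico a b) := by
    ext x; simp only [Finset.mem_Ico, Finset.mem_insert]; omega
  rw [h1, Finset.sum_insert (by simp), add_comm]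

private lemma ncard_Ioc (a b : ℤ) : (Set.Ioc a b).ncard = (b - a).toNat := by
  rw [← Finset.coe_Ioc, Set.ncard_coe_finset, Int.card_Ioc]

section RatSets

variable {p q : ℤ} (hp : 0 < p) (hq : 0 < q)
include hp hq

private lemma rat_lt (n k : ℤ) :
    ((n : ℤ) : ℚ) < (k : ℚ) * ((p : ℚ) / (q : ℚ)) ↔ n * q < k * p := by
  have hq' : (0 : ℚ) < (q : ℚ) := by exact_mod_cast hq
  rw [← mul_div_assoc, lt_div_iff₀ hq']
  exact_mod_cast Iff.rfl

private lemma rat_le (n k : ℤ) :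
    ((n : ℤ) : ℚ) ≤ (k : ℚ) * ((p : ℚ) / (q : ℚ)) ↔ n * q ≤ k * p := by
  have hq' : (0 : ℚ) < (q : ℚ) := by exact_mod_cast hq
  rw [← mul_div_assoc, le_div_iff₀ hq']
  exact_mod_cast Iff.rfl

private lemma rat_lt' (n k : ℤ) :
    (k : ℚ) * ((p : ℚ) / (q : ℚ)) < ((n : ℤ) : ℚ) ↔ k * p < n * q := by
  have hq' : (0 : ℚ) < (q : ℚ) := by exact_mod_cast hq
  rw [← mul_div_assoc, div_lt_iff₀ hq']
  exact_mod_cast Iff.rfl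

private lemma rat_le' (n k : ℤ) :
    (k : ℚ) * ((p : ℚ) / (q : ℚ)) ≤ ((n : ℤ) : ℚ) ↔ k * p ≤ n * q := by
  have hq' : (0 : ℚ) < (q : ℚ) := by exact_mod_cast hq
  rw [← mul_div_assoc, div_le_iff₀ hq']
  exact_mod_cast Iff.rfl

private lemma setA (n m : ℤ) :
    {k : ℤ | ((n : ℤ) : ℚ) < (k : ℚ) * ((p : ℚ) / (q : ℚ)) ∧
      (k : ℚ) * ((p : ℚ) / (q : ℚ)) ≤ ((m : ℤ) : ℚ)} = Set.Ioc (n * q / p) (m * q / p) := by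
  ext k
  simp only [Set.mem_setOf_eq, Set.mem_Ioc]
  rw [rat_lt hp hq, rat_le' hp hq]
  constructor
  · rintro ⟨h1, h2⟩
    exact ⟨(Int.ediv_lt_iff_lt_mul hp).mpr h1, (Int.le_ediv_iff_mul_le hp).mpr h2⟩
  · rintro ⟨h1, h2⟩
    exact ⟨(Int.ediv_lt_iff_lt_mul hp).mp h1, (Int.le_ediv_iff_mul_le hp).mp h2⟩

private lemma setB (n m : ℤ) :
    {k : ℤ | ((n : ℤ) : ℚ) ≤ (k : ℚ) * ((p : ℚ) / (q : ℚ)) ∧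
      (k : ℚ) * ((p : ℚ) / (q : ℚ)) < ((m : ℤ) : ℚ)} =
      Set.Ioc ((n * q - 1) / p) ((m * q - 1) / p) := by
  ext k
  simp only [Set.mem_setOf_eq, Set.mem_Ioc]
  rw [rat_le hp hq, rat_lt' hp hq]
  constructor
  · rintro ⟨h1, h2⟩
    exact ⟨(Int.ediv_lt_iff_lt_mul hp).mpr (by linarith),
      (Int.le_ediv_iff_mul_le hp).mpr (by linarith)⟩
  · rintro ⟨h1, h2⟩
    have h1' := (Int.ediv_lt_iff_lt_mul hp).mp h1
    have h2' := (Int.le_ediv_iff_mul_le hp).mp h2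
    exact ⟨by linarith, by linarith⟩

private lemma setC (n m : ℤ) :
    {k : ℤ | ((n : ℤ) : ℚ) < (k : ℚ) * ((p : ℚ) / (q : ℚ)) ∧
      (k : ℚ) * ((p : ℚ) / (q : ℚ)) < ((m : ℤ) : ℚ)} =
      Set.Ioc (n * q / p) ((m * q - 1) / p) := by
  ext k
  simp only [Set.mem_setOf_eq, Set.mem_Ioc]
  rw [rat_lt hp hq, rat_lt' hp hq]
  constructor
  · rintro ⟨h1, h2⟩
    exact ⟨(Int.ediv_lt_iff_lt_mul hp).mpr h1, (Int.le_ediv_iff_mul_le hp).mpr (by linarith)⟩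
  · rintro ⟨h1, h2⟩
    have h2' := (Int.le_ediv_iff_mul_le hp).mp h2
    exact ⟨(Int.ediv_lt_iff_lt_mul hp).mp h1, by linarith⟩

private lemma setD (n m : ℤ) :
    {k : ℤ | ((n : ℤ) : ℚ) ≤ (k : ℚ) * ((p : ℚ) / (q : ℚ)) ∧
      (k : ℚ) * ((p : ℚ) / (q : ℚ)) ≤ ((m : ℤ) : ℚ)} =
      Set.Ioc ((n * q - 1) / p) (m * q / p) := by
  ext k
  simp only [Set.mem_setOf_eq, Set.mem_Ioc]
  rw [rat_le hp hq, rat_le' hp hq]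
  constructor
  · rintro ⟨h1, h2⟩
    exact ⟨(Int.ediv_lt_iff_lt_mul hp).mpr (by linarith), (Int.le_ediv_iff_mul_le hp).mpr h2⟩
  · rintro ⟨h1, h2⟩
    have h1' := (Int.ediv_lt_iff_lt_mul hp).mp h1
    exact ⟨by linarith, (Int.le_ediv_iff_mul_le hp).mp h2⟩

private lemma cellLenS_neg {n : ℤ} (hn : n < 0) :
    (cellLenS p q n : ℤ) = (n + 1) * q / p - n * q / p := by
  unfold cellLenS
  rw [if_pos hn, show ((n : ℚ) + 1) = (((n + 1 : ℤ)) : ℚ) by push_cast; ring,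
    setA hp hq n (n + 1), ncard_Ioc]
  have := Int.ediv_le_ediv hp (show n * q ≤ (n + 1) * q by nlinarith)
  omega

private lemma cellLenS_zero :
    (cellLenS p q 0 : ℤ) = (q - 1) / p := by
  unfold cellLenS
  rw [if_neg (by omega), if_pos rfl,
    show (0 : ℚ) = (((0 : ℤ)) : ℚ) by norm_num, show (1 : ℚ) = (((1 : ℤ)) : ℚ) by norm_num,
    setC hp hq 0 1, ncard_Ioc]
  rw [show ((0 : ℤ) * q) = 0 by ring, Int.zero_ediv, show ((1 : ℤ) * q - 1) = q - 1 by ring]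
  have : (0 : ℤ) ≤ (q - 1) / p := Int.ediv_nonneg (by omega) hp.le
  omega

private lemma cellLenS_pos {n : ℤ} (hn : 0 < n) :
    (cellLenS p q n : ℤ) = ((n + 1) * q - 1) / p - (n * q - 1) / p := by
  unfold cellLenS
  rw [if_neg (by omega), if_neg (by omega),
    show ((n : ℚ) + 1) = (((n + 1 : ℤ)) : ℚ) by push_cast; ring,
    setB hp hq n (n + 1), ncard_Ioc]
  have := Int.ediv_le_ediv hp (show n * q - 1 ≤ (n + 1) * q - 1 by nlinarith)
  omega

private lemma cellLenS'_neg {n : ℤ} (hn : n < 0) :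
    (cellLenS' p q n : ℤ) = ((n + 1) * q - 1) / p - (n * q - 1) / p := by
  unfold cellLenS'
  rw [if_pos hn, show ((n : ℚ) + 1) = (((n + 1 : ℤ)) : ℚ) by push_cast; ring,
    setB hp hq n (n + 1), ncard_Ioc]
  have := Int.ediv_le_ediv hp (show n * q - 1 ≤ (n + 1) * q - 1 by nlinarith)
  omega

private lemma cellLenS'_zero :
    (cellLenS' p q 0 : ℤ) = q / p + 1 := by
  unfold cellLenS'
  rw [if_neg (by omega), if_pos rfl,
    show (0 : ℚ) = (((0 : ℤ)) : ℚ) by norm_num, show (1 : ℚ) = (((1 : ℤ)) : ℚ) by norm_num,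
    setD hp hq 0 1, ncard_Ioc]
  rw [show ((0 : ℤ) * q - 1) = -1 by ring, neg_one_ediv hp, show ((1 : ℤ) * q) = q by ring]
  have : (0 : ℤ) ≤ q / p := Int.ediv_nonneg hq.le hp.le
  omega

private lemma cellLenS'_pos {n : ℤ} (hn : 0 < n) :
    (cellLenS' p q n : ℤ) = (n + 1) * q / p - n * q / p := by
  unfold cellLenS'
  rw [if_neg (by omega), if_neg (by omega),
    show ((n : ℚ) + 1) = (((n + 1 : ℤ)) : ℚ) by push_cast; ring,
    setA hp hq n (n + 1), ncard_Ioc]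
  have := Int.ediv_le_ediv hp (show n * q ≤ (n + 1) * q by nlinarith)
  omega

private lemma sumS_nonpos :
    ∀ n : ℤ, n ≤ 0 → (∑ j ∈ Finset.Ico n (0 : ℤ), (cellLenS p q j : ℤ)) = -(n * q / p) := by
  intro n
  induction n using Int.induction_on with
  | zero => intro _; simp
  | succ j _ =>
    intro h
    have : (0 : ℤ) ≤ (j : ℤ) := Int.natCast_nonneg j
    omega
  | pred j ih =>
    intro _
    rw [sum_Ico_bot _ (by omega : (-(j : ℤ) - 1) < 0),
      cellLenS_neg hp hq (show (-(j : ℤ) - 1) < 0 by omega),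
      show (-(j : ℤ) - 1 + 1) = -(j : ℤ) from by ring, ih (by omega)]
    ring

private lemma sumS_base :
    (∑ j ∈ Finset.Ico (0 : ℤ) 1, (cellLenS p q j : ℤ)) = (1 * q - 1) / p := by
  have h0 : Finset.Ico (0 : ℤ) 1 = {0} := by
    ext x; simp only [Finset.mem_Ico, Finset.mem_singleton]; omega
  rw [h0, Finset.sum_singleton, cellLenS_zero hp hq, one_mul]

private lemma sumS_pos :
    ∀ n : ℤ, 1 ≤ n → (∑ j ∈ Finset.Ico (0 : ℤ) n, (cellLenS p q j : ℤ)) = (n * q - 1) / p := by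
  intro n
  induction n using Int.induction_on with
  | zero => intro h; omega
  | succ j ih =>
    intro _
    rcases Nat.eq_zero_or_pos j with rfl | hj
    · simpa using sumS_base hp hq
    · have hj1 : (1 : ℤ) ≤ (j : ℤ) := by exact_mod_cast hj
      rw [sum_Ico_top _ (by omega : (0 : ℤ) ≤ (j : ℤ)), ih (by omega),
        cellLenS_pos hp hq (by omega)]
      ring
  | pred j ih =>
    intro h
    have : (0 : ℤ) ≤ (j : ℤ) := Int.natCast_nonneg j
    omega

private lemma sumS'_nonpos :
    ∀ n : ℤ, n ≤ 0 →
      (∑ j ∈ Finset.Ico n (0 : ℤ), (cellLenS' p q j : ℤ)) = -1 - (n * q - 1) / p := by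
  intro n
  induction n using Int.induction_on with
  | zero =>
    intro _
    simp only [Finset.Ico_self, Finset.sum_empty]
    rw [show ((0 : ℤ) * q - 1) = -1 by ring, neg_one_ediv hp]
    ring
  | succ j _ =>
    intro h
    have : (0 : ℤ) ≤ (j : ℤ) := Int.natCast_nonneg j
    omega
  | pred j ih =>
    intro _
    rw [sum_Ico_bot _ (by omega : (-(j : ℤ) - 1) < 0),
      cellLenS'_neg hp hq (show (-(j : ℤ) - 1) < 0 by omega),
      show (-(j : ℤ) - 1 + 1) = -(j : ℤ) from by ring, ih (by omega)]
    ring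

private lemma sumS'_base :
    (∑ j ∈ Finset.Ico (0 : ℤ) 1, (cellLenS' p q j : ℤ)) = 1 * q / p + 1 := by
  have h0 : Finset.Ico (0 : ℤ) 1 = {0} := by
    ext x; simp only [Finset.mem_Ico, Finset.mem_singleton]; omega
  rw [h0, Finset.sum_singleton, cellLenS'_zero hp hq, one_mul]

private lemma sumS'_pos :
    ∀ n : ℤ, 1 ≤ n → (∑ j ∈ Finset.Ico (0 : ℤ) n, (cellLenS' p q j : ℤ)) = n * q / p + 1 := by
  intro n
  induction n using Int.induction_on with
  | zero => intro h; omega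
  | succ j ih =>
    intro _
    rcases Nat.eq_zero_or_pos j with rfl | hj
    · simpa using sumS'_base hp hq
    · have hj1 : (1 : ℤ) ≤ (j : ℤ) := by exact_mod_cast hj
      rw [sum_Ico_top _ (by omega : (0 : ℤ) ≤ (j : ℤ)), ih (by omega),
        cellLenS'_pos hp hq (by omega)]
      ring
  | pred j ih =>
    intro h
    have : (0 : ℤ) ≤ (j : ℤ) := Int.natCast_nonneg j
    omega

private lemma cellStartS_nonpos {n : ℤ} (hn : n ≤ 0) :
    cellStart (cellLenS p q) n = n * (p + q) / p := by
  rcases eq_or_lt_of_le hn with rfl | hlt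
  · simp [cellStart]
  · rw [cellStart, if_neg (by omega), sumS_nonpos hp hq n (by omega),
      show n * (p + q) = n * q + n * p from by ring,
      Int.add_mul_ediv_right _ _ (by omega : p ≠ 0)]
    ring

private lemma cellStartS_pos {n : ℤ} (hn : 1 ≤ n) :
    cellStart (cellLenS p q) n = (n * (p + q) - 1) / p := by
  rw [cellStart, if_pos (by omega), sumS_pos hp hq n hn,
    show n * (p + q) - 1 = (n * q - 1) + n * p from by ring,
    Int.add_mul_ediv_right _ _ (by omega : p ≠ 0)]
  ring

private lemma cellStartS'_neg {n : ℤ} (hn : n ≤ -1) :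
    cellStart (cellLenS' p q) n = (n * (p + q) - 1) / p + 1 := by
  rw [cellStart, if_neg (by omega), sumS'_nonpos hp hq n (by omega),
    show n * (p + q) - 1 = (n * q - 1) + n * p from by ring,
    Int.add_mul_ediv_right _ _ (by omega : p ≠ 0)]
  ring

private lemma cellStartS'_zero : cellStart (cellLenS' p q) 0 = 0 := by
  simp [cellStart]

private lemma cellStartS'_pos {n : ℤ} (hn : 1 ≤ n) :
    cellStart (cellLenS' p q) n = n * (p + q) / p + 1 := by
  rw [cellStart, if_pos (by omega), sumS'_pos hp hq n hn,
    show n * (p + q) = n * q + n * p from by ring,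
    Int.add_mul_ediv_right _ _ (by omega : p ≠ 0)]
  ring

private lemma memS_left {k : ℤ} (hk : k ≤ 0) :
    (∃ n : ℤ, k = cellStart (cellLenS p q) n) ↔ ((-k) * p) % (p + q) < p := by
  constructor
  · rintro ⟨n, rfl⟩
    by_cases hn : n ≤ 0
    · rw [cellStartS_nonpos hp hq hn] at hk ⊢
      obtain ⟨h1, h2⟩ := (ediv_eq_iff' hp).mp (rfl : n * (p + q) / p = n * (p + q) / p)
      have e2 : (n * (p + q) / p + 1) * p = n * (p + q) / p * p + p := by ring
      have hr : ((-(n * (p + q) / p)) * p) % (p + q) = n * (p + q) - n * (p + q) / p * p :=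
        emod_eq_of ⟨-n, by ring⟩ (by linarith) (by linarith)
      rw [hr]
      linarith
    · exfalso
      push_neg at hn
      rw [cellStartS_pos hp hq (by omega)] at hk
      have h1 : p ≤ n * (p + q) - 1 := by nlinarith
      have h2 := Int.ediv_le_ediv hp h1
      rw [Int.ediv_self (by omega : p ≠ 0)] at h2
      omega
  · intro hr
    have hr0 : 0 ≤ ((-k) * p) % (p + q) := Int.emod_nonneg _ (by omega)
    have hdm := Int.mul_ediv_add_emod ((-k) * p) (p + q)
    set m := (-k) * p / (p + q) with hm
    set r := ((-k) * p) % (p + q) with hrr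
    have hmT : (-m) * (p + q) = k * p + r := by linear_combination -hdm
    have hkp : k * p ≤ 0 := by nlinarith
    have hn0 : -m ≤ 0 := by nlinarith
    refine ⟨-m, ?_⟩
    rw [cellStartS_nonpos hp hq hn0]
    have e2 : (k + 1) * p = k * p + p := by ring
    exact ((ediv_eq_iff' hp).mpr ⟨by linarith, by linarith⟩).symm

private lemma memS_right {k : ℤ} (hk : 1 ≤ k) :
    (∃ n : ℤ, k = cellStart (cellLenS p q) n) ↔ ((-k) * p - 1) % (p + q) < p := by
  constructor
  · rintro ⟨n, rfl⟩
    by_cases hn : n ≤ 0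
    · exfalso
      rw [cellStartS_nonpos hp hq hn] at hk
      have h1 : n * (p + q) ≤ 0 := by nlinarith
      have h2 := Int.ediv_le_ediv hp h1
      rw [Int.zero_ediv] at h2
      omega
    · push_neg at hn
      rw [cellStartS_pos hp hq (by omega)] at hk ⊢
      obtain ⟨h1, h2⟩ :=
        (ediv_eq_iff' hp).mp (rfl : (n * (p + q) - 1) / p = (n * (p + q) - 1) / p)
      have e2 : ((n * (p + q) - 1) / p + 1) * p = (n * (p + q) - 1) / p * p + p := by ring
      have hr : ((-((n * (p + q) - 1) / p)) * p - 1) % (p + q)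
          = n * (p + q) - 1 - (n * (p + q) - 1) / p * p :=
        emod_eq_of ⟨-n, by ring⟩ (by linarith) (by linarith)
      rw [hr]
      linarith
  · intro hr
    have hr0 : 0 ≤ ((-k) * p - 1) % (p + q) := Int.emod_nonneg _ (by omega)
    have hdm := Int.mul_ediv_add_emod ((-k) * p - 1) (p + q)
    set m := ((-k) * p - 1) / (p + q) with hm
    set r := ((-k) * p - 1) % (p + q) with hrr
    have hmT : (-m) * (p + q) = k * p + 1 + r := by linear_combination -hdm
    have hkp : p ≤ k * p := by nlinarith
    have hn1 : 1 ≤ -m := by nlinarith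
    refine ⟨-m, ?_⟩
    rw [cellStartS_pos hp hq hn1]
    have e2 : (k + 1) * p = k * p + p := by ring
    exact ((ediv_eq_iff' hp).mpr ⟨by linarith, by linarith⟩).symm

private lemma memS'_left {k : ℤ} (hk : k ≤ 1) :
    (∃ n : ℤ, k = cellStart (cellLenS' p q) n) ↔ (k * p) % (p + q) < p := by
  constructor
  · rintro ⟨n, rfl⟩
    rcases lt_trichotomy n 0 with hn | rfl | hn
    · rw [cellStartS'_neg hp hq (by omega)] at hk ⊢
      obtain ⟨h1, h2⟩ :=
        (ediv_eq_iff' hp).mp (rfl : (n * (p + q) - 1) / p = (n * (p + q) - 1) / p)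
      have e2 : ((n * (p + q) - 1) / p + 1) * p = (n * (p + q) - 1) / p * p + p := by ring
      have hr : (((n * (p + q) - 1) / p + 1) * p) % (p + q)
          = ((n * (p + q) - 1) / p + 1) * p - n * (p + q) :=
        emod_eq_of ⟨n, by ring⟩ (by linarith) (by linarith)
      rw [hr]
      linarith
    · rw [cellStartS'_zero hp hq, zero_mul, Int.zero_emod]
      exact hp
    · exfalso
      rw [cellStartS'_pos hp hq (by omega)] at hk
      have h1 : p ≤ n * (p + q) := by nlinarith
      have h2 := Int.ediv_le_ediv hp h1
      rw [Int.ediv_self (by omega : p ≠ 0)] at h2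
      omega
  · intro hr
    rcases eq_or_lt_of_le hk with rfl | hk1
    · exfalso
      rw [one_mul, Int.emod_eq_of_lt hp.le (by omega)] at hr
      omega
    · have hk0 : k ≤ 0 := by omega
      set r := (k * p) % (p + q) with hrr
      have hr0 : 0 ≤ r := Int.emod_nonneg _ (by omega)
      have hdm := Int.mul_ediv_add_emod (k * p) (p + q)
      set m := k * p / (p + q) with hm
      have hmT : m * (p + q) = k * p - r := by linear_combination hdm
      have hkp : k * p ≤ 0 := by nlinarith
      have hm0 : m ≤ 0 := by nlinarith
      rcases eq_or_lt_of_le hm0 with hm1 | hm1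
      · have hkp0 : k * p = 0 := by
          rw [hm1, zero_mul] at hmT
          linarith
        have hk00 : k = 0 := by
          rcases mul_eq_zero.mp hkp0 with h | h
          · exact h
          · omega
        subst hk00
        exact ⟨0, (cellStartS'_zero hp hq).symm⟩
      · refine ⟨m, ?_⟩
        rw [cellStartS'_neg hp hq (by omega)]
        have e1 : (k - 1) * p = k * p - p := by ring
        have e2 : (k - 1 + 1) * p = k * p := by ring
        have h5 : (m * (p + q) - 1) / p = k - 1 :=
          (ediv_eq_iff' hp).mpr ⟨by linarith, by linarith⟩
        omega

private lemma memS'_right {k : ℤ} (hk : 2 ≤ k) :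
    (∃ n : ℤ, k = cellStart (cellLenS' p q) n) ↔ (k * p - 1) % (p + q) < p := by
  constructor
  · rintro ⟨n, rfl⟩
    rcases lt_trichotomy n 0 with hn | rfl | hn
    · exfalso
      rw [cellStartS'_neg hp hq (by omega)] at hk
      have h1 : n * (p + q) - 1 ≤ -1 := by nlinarith
      have h2 := Int.ediv_le_ediv hp h1
      rw [neg_one_ediv hp] at h2
      omega
    · exfalso
      rw [cellStartS'_zero hp hq] at hk
      omega
    · rw [cellStartS'_pos hp hq (by omega)] at hk ⊢
      obtain ⟨h1, h2⟩ := (ediv_eq_iff' hp).mp (rfl : n * (p + q) / p = n * (p + q) / p)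
      have e2 : (n * (p + q) / p + 1) * p = n * (p + q) / p * p + p := by ring
      have hr : ((n * (p + q) / p + 1) * p - 1) % (p + q)
          = (n * (p + q) / p + 1) * p - 1 - n * (p + q) :=
        emod_eq_of ⟨n, by ring⟩ (by linarith) (by linarith)
      rw [hr]
      linarith
  · intro hr
    set r := (k * p - 1) % (p + q) with hrr
    have hr0 : 0 ≤ r := Int.emod_nonneg _ (by omega)
    have hdm := Int.mul_ediv_add_emod (k * p - 1) (p + q)
    set m := (k * p - 1) / (p + q) with hm
    have hmT : m * (p + q) = k * p - 1 - r := by linear_combination hdm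
    have hkp : 2 * p ≤ k * p := by nlinarith
    have hm1 : 1 ≤ m := by nlinarith
    refine ⟨m, ?_⟩
    rw [cellStartS'_pos hp hq hm1]
    have e1 : (k - 1) * p = k * p - p := by ring
    have e2 : (k - 1 + 1) * p = k * p := by ring
    have h5 : m * (p + q) / p = k - 1 :=
      (ediv_eq_iff' hp).mpr ⟨by linarith, by linarith⟩
    omega

private lemma sturmS_eq_left {k : ℤ} (hk : k ≤ 0) :
    sturmS p q k = pat p (p + q) (-k) := by
  unfold sturmS seqOfCells pat
  exact if_congr (memS_left hp hq hk) rfl rfl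

private lemma sturmS_eq_right {a b : ℤ} (hab : b * q - a * p = 1) {k : ℤ} (hk : 1 ≤ k) :
    sturmS p q k = pat p (p + q) (-(k + ((p + q) - (a + b)))) := by
  unfold sturmS seqOfCells pat
  refine if_congr ?_ rfl rfl
  rw [memS_right hp hq hk]
  have e : ((-(k + ((p + q) - (a + b)))) * p) % (p + q) = ((-k) * p - 1) % (p + q) :=
    emod_congr ⟨b - p, by linear_combination -hab⟩
  rw [e]

private lemma sturmS'_eq_left {k : ℤ} (hk : k ≤ 1) :
    sturmS' p q k = pat p (p + q) k := by
  unfold sturmS' seqOfCells pat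
  exact if_congr (memS'_left hp hq hk) rfl rfl

private lemma sturmS'_eq_right {a b : ℤ} (hab : b * q - a * p = 1) {k : ℤ} (hk : 2 ≤ k) :
    sturmS' p q k = pat p (p + q) (k + (a + b)) := by
  unfold sturmS' seqOfCells pat
  refine if_congr ?_ rfl rfl
  rw [memS'_right hp hq hk]
  have e : ((k + (a + b)) * p) % (p + q) = (k * p - 1) % (p + q) :=
    emod_congr ⟨b, by linear_combination -hab⟩
  rw [e]

end RatSets

private lemma anomaly_size_eq (x P : ℤ → Fin 2) (T s i₀ : ℤ)
    (hT : 0 < T) (hs : 0 < s) (hsT : s < T)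
    (hper : ∀ k, P (k + T) = P k)
    (hrig : ∀ s' : ℤ, (∀ k, P (k + s') = P k) → T ∣ s')
    (hL : ∀ k, k ≤ i₀ → x k = P k)
    (hR : ∀ k, i₀ < k → x k = P (k + s)) :
    anomalySize x = (T - s).toNat := by
  have hPj : ∀ (j k : ℤ), P (k + j * T) = P k := periodic_shift hper
  have hmem : (T - s).toNat ∈ {n : ℕ | ∃ i : ℤ, IsAnomalyOcc x i n} := by
    refine ⟨i₀, by omega, T.toNat, by omega, ?_⟩
    have hy : ∀ k, removeBlock x i₀ (T - s).toNat k = P k := by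
      intro k
      simp only [removeBlock]
      split_ifs with h
      · exact hL k h
      · push_neg at h
        have hc : (((T - s).toNat : ℤ)) = T - s := by omega
        rw [hR (k + ((T - s).toNat : ℤ)) (by omega), hc,
          show k + (T - s) + s = k + T from by ring, hper]
    intro i
    rw [hy (i + (T.toNat : ℤ)), hy i, show ((T.toNat : ℤ)) = T from by omega, hper]
  have hlb : ∀ n : ℕ, (∃ i : ℤ, IsAnomalyOcc x i n) → (T - s).toNat ≤ n := by
    rintro n ⟨i, hn0, N, hN0, hNper⟩
    set y := removeBlock x i n with hy
    have hyj : ∀ (j k : ℤ), y (k + j * (N : ℤ)) = y k := periodic_shift hNper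
    have hNz : (0 : ℤ) < (N : ℤ) := by exact_mod_cast hN0
    have hyP : ∀ k, y k = P k := by
      intro k
      set c := min i i₀ with hc
      set j := min (c - k) 0 with hj
      have hj0 : j ≤ 0 := min_le_right _ _
      have hjk : k + j ≤ c := by
        have := min_le_left (c - k) 0
        omega
      have hM1 : (1 : ℤ) ≤ (N : ℤ) * T := by nlinarith
      have hMj : j * ((N : ℤ) * T) ≤ j := by nlinarith
      have e1 : y (k + (j * T) * (N : ℤ)) = y k := hyj (j * T) k
      rw [show (j * T) * (N : ℤ) = j * ((N : ℤ) * T) from by ring] at e1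
      have hsm : k + j * ((N : ℤ) * T) ≤ c := by linarith
      have e3 : y (k + j * ((N : ℤ) * T)) = x (k + j * ((N : ℤ) * T)) := by
        rw [hy]
        simp only [removeBlock]
        rw [if_pos (show k + j * ((N : ℤ) * T) ≤ i from by
          have := min_le_left i i₀
          omega)]
      have e4 : x (k + j * ((N : ℤ) * T)) = P (k + j * ((N : ℤ) * T)) :=
        hL _ (by
          have := min_le_right i i₀
          omega)
      have e5 : P (k + (j * (N : ℤ)) * T) = P k := hPj (j * (N : ℤ)) k
      rw [show (j * (N : ℤ)) * T = j * ((N : ℤ) * T) from by ring] at e5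
      rw [← e1, e3, e4, e5]
    have hshift : ∀ k, P (k + ((n : ℤ) + s)) = P k := by
      intro k
      set c := max i i₀ with hc
      set m := max (c + 1 - k) 0 with hm
      have hm0 : 0 ≤ m := le_max_right _ _
      have hmk : c < k + m := by
        have := le_max_left (c + 1 - k) 0
        omega
      have hmT : m ≤ m * T := le_mul_of_one_le_right hm0 (by omega)
      have hbig : c < k + m * T := by linarith
      have e1 : P (k + ((n : ℤ) + s) + m * T) = P (k + ((n : ℤ) + s)) := hPj m (k + ((n : ℤ) + s))
      have e2 : x (k + m * T + (n : ℤ)) = P (k + m * T + (n : ℤ) + s) :=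
        hR _ (by
          have h9 := le_max_right i i₀
          have h8 : (0 : ℤ) ≤ (n : ℤ) := Int.natCast_nonneg n
          omega)
      have e3 : y (k + m * T) = x (k + m * T + (n : ℤ)) := by
        rw [hy]
        simp only [removeBlock]
        rw [if_neg (show ¬ (k + m * T ≤ i) from by
          have := le_max_left i i₀
          omega)]
      have e4 : y (k + m * T) = P (k + m * T) := hyP _
      have e5 : P (k + m * T) = P k := hPj m k
      rw [show k + m * T + (n : ℤ) + s = k + ((n : ℤ) + s) + m * T from by ring] at e2
      rw [← e1, ← e2, ← e3, e4, e5]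
    obtain ⟨t, ht⟩ := hrig ((n : ℤ) + s) hshift
    have hn1 : (1 : ℤ) ≤ (n : ℤ) := by exact_mod_cast hn0
    have ht1 : 1 ≤ t := by nlinarith
    have hTle : T ≤ (n : ℤ) + s := by nlinarith
    omega
  exact le_antisymm (Nat.sInf_le hmem) (le_csInf ⟨_, hmem⟩ hlb)

private lemma anomalyS {p q a b : ℤ} (hp : 0 < p) (hq : 0 < q)
    (ha : 0 ≤ a) (ha' : a < q) (hb : 0 < b) (hb' : b ≤ p)
    (hab : b * q - a * p = 1) :
    anomalySize (sturmS p q) = (a + b).toNat := by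
  have key := anomaly_size_eq (sturmS p q) (fun k => pat p (p + q) (-k))
    (p + q) ((p + q) - (a + b)) 0
    (by omega) (by omega) (by omega)
    (fun k => pat_congr (emod_congr ⟨-p, by ring⟩))
    (fun s' H => pat_rigid hp hq hab (fun m => by
      have h2 := H (-(m + s'))
      rw [show -(-(m + s') + s') = m from by ring,
        show -(-(m + s')) = m + s' from by ring] at h2
      exact h2.symm))
    (fun k hk => sturmS_eq_left hp hq hk)
    (fun k hk => sturmS_eq_right hp hq hab (by omega))
  rw [key]
  omega

private lemma anomalyS' {p q a b : ℤ} (hp : 0 < p) (hq : 0 < q)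
    (ha : 0 ≤ a) (ha' : a < q) (hb : 0 < b) (hb' : b ≤ p)
    (hab : b * q - a * p = 1) :
    anomalySize (sturmS' p q) = ((p + q) - (a + b)).toNat := by
  exact anomaly_size_eq (sturmS' p q) (fun k => pat p (p + q) k)
    (p + q) (a + b) 1
    (by omega) (by omega) (by omega)
    (fun k => pat_congr (emod_congr ⟨p, by ring⟩))
    (fun s' H => pat_rigid hp hq hab (fun m => H m))
    (fun k hk => sturmS'_eq_left hp hq hk)
    (fun k hk => sturmS'_eq_right hp hq hab (by omega))

end Stmt15

/-- If `(a,b)` and `(e,f)` are the restricted Bézout coefficients of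
`(q,p)` and `(q-c, p+c)` respectively (`c ≠ 0`), then `a+b ≠ e+f`; consequently the
anomaly sizes of the corresponding same-type skew Sturmian sequences differ. -/
theorem stmt_15 (p q c : ℤ) (hp : 0 < p) (hq : 0 < q) (hpq : IsCoprime p q)
    (hc : c ≠ 0) (hqc : 0 < q - c) (hpc : 0 < p + c) (hpq2 : IsCoprime (q - c) (p + c))
    (a b : ℤ) (ha : 0 ≤ a) (ha' : a < q) (hb : 0 < b) (hb' : b ≤ p)
    (hab : b * q - a * p = 1)
    (e f : ℤ) (he : 0 ≤ e) (he' : e < q - c) (hf : 0 < f) (hf' : f ≤ p + c)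
    (hef : f * (q - c) - e * (p + c) = 1) :
    a + b ≠ e + f ∧
      anomalySize (sturmS p q) ≠ anomalySize (sturmS (p + c) (q - c)) ∧
      anomalySize (sturmS' p q) ≠ anomalySize (sturmS' (p + c) (q - c)) := by
  have h1 : a + b ≠ e + f := by
    intro hcon
    have e1 : (a + b) * p = b * (p + q) - 1 := by linear_combination -hab
    have e2 : (e + f) * (p + c) = f * (p + q) - 1 := by linear_combination -hef
    have e3 : (e + f) * c = (f - b) * (p + q) := by
      linear_combination e2 - e1 + p * hcon
    have hcop : IsCoprime ((p + q) : ℤ) (e + f) := ⟨f, -(p + c), by linear_combination hef⟩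
    have hdvd : ((p + q) : ℤ) ∣ (e + f) * c := ⟨f - b, by linear_combination e3⟩
    have hdc : ((p + q) : ℤ) ∣ c := hcop.dvd_of_dvd_mul_left hdvd
    obtain ⟨t, ht⟩ := hdc
    rcases lt_trichotomy t 0 with h | h | h
    · nlinarith
    · rw [h, mul_zero] at ht
      exact hc ht
    · nlinarith
  refine ⟨h1, ?_, ?_⟩
  · rw [Stmt15.anomalyS hp hq ha ha' hb hb' hab,
      Stmt15.anomalyS hpc hqc he he' hf hf' hef]
    omega
  · rw [Stmt15.anomalyS' hp hq ha ha' hb hb' hab,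
      Stmt15.anomalyS' hpc hqc he he' hf hf' hef]
    omega
end

section
/- Let A be a finite alphabet, let x ∈ A^ℤ be an eventually periodic sequence, and let (i,n) be an anomaly occurrence of x. Then the subshift generated by x equals the union of the orbit of x and the orbit of p(x;i,n): closure{σ^k(x) : k ∈ ℤ} = {σ^k(x) : k ∈ ℤ} ∪ {σ^k(p(x;i,n)) : k ∈ ℤ}. -/
open Classical

private lemma per_mul {A : Type*} {p : ℤ → A} {N : ℕ}
    (hp : ∀ t : ℤ, p (t + N) = p t) : ∀ (m : ℤ) (t : ℤ), p (t + m * N) = p t := by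
  intro m
  induction m using Int.induction_on with
  | zero => simp
  | succ m ih =>
      intro t
      have he : t + ((m : ℤ) + 1) * N = (t + N) + m * N := by ring
      rw [he, ih, hp]
  | pred m ih =>
      intro t
      have h1 := hp (t + (-(m : ℤ) - 1) * N)
      have he : t + (-(m : ℤ) - 1) * N + N = t + (-(m : ℤ)) * N := by ring
      rw [he] at h1
      rw [← h1, ih]

private lemma per_emod {A : Type*} {p : ℤ → A} {N : ℕ}
    (hp : ∀ t : ℤ, p (t + N) = p t) (s : ℤ) : p s = p (s % (N : ℤ)) := by
  have h2 : s % (N : ℤ) + (s / (N : ℤ)) * (N : ℤ) = s := by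
    rw [mul_comm]; exact Int.emod_add_mul_ediv s N
  conv_lhs => rw [← h2]
  exact per_mul hp (s / (N : ℤ)) (s % (N : ℤ))

/-- For an eventually periodic sequence `x` with anomaly occurrence
`(i,n)`, the subshift generated by `x` is the union of the orbit of `x` and the orbit of
`p(x;i,n)`. -/
theorem stmt_18 {A : Type*} [Fintype A] [TopologicalSpace A] [DiscreteTopology A]
    (x : ℤ → A) (hx : EventuallyPeriodic x) (i : ℤ) (n : ℕ) (h : IsAnomalyOcc x i n) :
    subshiftGen x = seqOrbit x ∪ seqOrbit (removeBlock x i n) := by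
  obtain ⟨hn0, N, hN0, hNper⟩ := h
  set p : ℤ → A := removeBlock x i n with hpdef
  have hxp_left : ∀ t : ℤ, t ≤ i → p t = x t := by
    intro t ht; simp [hpdef, removeBlock, ht]
  have hxp_right : ∀ t : ℤ, i < t → p t = x (t + n) := by
    intro t ht; simp [hpdef, removeBlock, not_le.2 ht]
  have hper := per_mul hNper
  have hmod := per_emod hNper
  -- p is in the closure of the orbit of x
  have hpmem : p ∈ subshiftGen x := by
    apply mem_closure_of_tendsto
      (f := fun m : ℕ => shiftZ (-((m : ℤ) * N)) x) (b := Filter.atTop) (x := p)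
    · rw [tendsto_pi_nhds]
      intro j
      refine Filter.Tendsto.congr'
        (f₁ := fun _ : ℕ => p j) ?_ tendsto_const_nhds
      filter_upwards [Filter.eventually_ge_atTop (j - i).toNat] with m hm
      have hmul : (m : ℤ) ≤ (m : ℤ) * N := by
        nlinarith [Int.natCast_nonneg m, (by exact_mod_cast hN0 : (0 : ℤ) < N)]
      have hle : j + -((m : ℤ) * N) ≤ i := by
        have h1 : ((j - i).toNat : ℤ) ≤ (m : ℤ) := by exact_mod_cast hm
        omega
      calc p j = p (j + (-(m : ℤ)) * N) := (hper (-(m : ℤ)) j).symm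
        _ = p (j + -((m : ℤ) * N)) := by ring_nf
        _ = x (j + -((m : ℤ) * N)) := hxp_left _ hle
        _ = shiftZ (-((m : ℤ) * N)) x j := rfl
    · exact Filter.Eventually.of_forall fun m => ⟨-((m : ℤ) * N), rfl⟩
  -- the orbit of p is contained in the closure
  have horb : seqOrbit p ⊆ subshiftGen x := by
    rintro z ⟨k, rfl⟩
    have hc : Continuous (shiftZ k : (ℤ → A) → (ℤ → A)) :=
      continuous_pi fun j => continuous_apply (j + k)
    have hmap : Set.MapsTo (shiftZ k) (seqOrbit x) (seqOrbit x) := by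
      rintro z ⟨m, rfl⟩
      refine ⟨m + k, funext fun j => ?_⟩
      show x (j + k + m) = x (j + (m + k))
      congr 1; ring
    exact map_mem_closure hc hpmem hmap
  -- forward inclusion
  have hfwd : subshiftGen x ⊆ seqOrbit x ∪ seqOrbit p := by
    intro y hy
    have hy' : y ∈ closure (seqOrbit x) := hy
    have hU : ∀ C : ℕ, ∃ k : ℤ, ∀ j : ℤ, |j| ≤ (C : ℤ) → x (j + k) = y j := by
      intro C
      have hopen : IsOpen (⋂ j ∈ Finset.Icc (-(C : ℤ)) (C : ℤ), {z : ℤ → A | z j = y j}) := by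
        apply isOpen_biInter_finset
        intro j _
        have he : {z : ℤ → A | z j = y j} = (fun z : ℤ → A => z j) ⁻¹' {y j} := rfl
        rw [he]
        exact (isOpen_discrete ({y j} : Set A)).preimage (continuous_apply j)
      have hmem : y ∈ ⋂ j ∈ Finset.Icc (-(C : ℤ)) (C : ℤ), {z : ℤ → A | z j = y j} := by
        simp
      obtain ⟨z, hzU, hzO⟩ := (mem_closure_iff.1 hy' _ hopen hmem)
      obtain ⟨k, rfl⟩ := hzO
      refine ⟨k, fun j hj => ?_⟩
      have hjmem : j ∈ Finset.Icc (-(C : ℤ)) (C : ℤ) := by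
        rw [Finset.mem_Icc]; constructor <;> [exact neg_le_of_abs_le hj; exact le_of_abs_le hj]
      have := Set.mem_iInter₂.1 hzU j hjmem
      exact this
    choose k hk using hU
    by_cases hb : ∃ k₀ : ℤ, ∀ C : ℕ, ∃ C' : ℕ, C ≤ C' ∧ k C' = k₀
    · left
      obtain ⟨k₀, hk₀⟩ := hb
      refine ⟨k₀, funext fun j => ?_⟩
      obtain ⟨C', hC', hkC⟩ := hk₀ |j|.toNat
      have hwin : |j| ≤ (C' : ℤ) := by
        have h1 : ((|j|.toNat : ℕ) : ℤ) ≤ (C' : ℤ) := by exact_mod_cast hC'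
        omega
      have := hk C' j hwin
      rw [hkC] at this
      exact this.symm
    · push_neg at hb
      choose t ht using hb
      have hsel : ∀ C : ℕ, ∃ s : ℤ,
          (∀ j : ℤ, |j| ≤ (C : ℤ) → x (j + s) = y j) ∧
          (s ≤ i - C ∨ (i + (n : ℤ) + C + 1 : ℤ) ≤ s) := by
        intro C
        set F : Finset ℤ := Finset.Icc (i - C) (i + (n : ℤ) + C) with hF
        set T : ℕ := F.sup t with hT
        set M : ℕ := max C T with hM
        refine ⟨k M, fun j hj => hk M j (hj.trans (by exact_mod_cast le_max_left C T)), ?_⟩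
        have hnot : k M ∉ F := by
          intro hmem
          exact ht (k M) M (le_trans (Finset.le_sup hmem) (le_max_right C T)) rfl
        rw [hF, Finset.mem_Icc] at hnot
        omega
      choose sel hsel1 hsel2 using hsel
      set rInt : ℕ → ℤ := fun C => (if sel C ≤ i - C then sel C else sel C - n) % (N : ℤ)
        with hrInt
      have hNz : (N : ℤ) ≠ 0 := by exact_mod_cast hN0.ne'
      have hr : ∀ C, 0 ≤ rInt C ∧ rInt C < (N : ℤ) := fun C =>
        ⟨Int.emod_nonneg _ hNz, Int.emod_lt_of_pos _ (by exact_mod_cast hN0)⟩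
      set g : ℕ → Fin N := fun C => ⟨(rInt C).toNat, by have := hr C; omega⟩ with hg
      obtain ⟨r₀, hr₀⟩ := Finite.exists_infinite_fiber g
      have hinf : (g ⁻¹' {r₀} : Set ℕ).Infinite := Set.infinite_coe_iff.mp hr₀
      right
      refine ⟨((r₀ : ℕ) : ℤ), funext fun j => ?_⟩
      obtain ⟨C, hCmem, hCgt⟩ := hinf.exists_gt |j|.toNat
      have hrval : rInt C = ((r₀ : ℕ) : ℤ) := by
        have h1 : (rInt C).toNat = (r₀ : ℕ) := congrArg Fin.val hCmem
        have := hr C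
        omega
      have hwin : |j| ≤ (C : ℤ) := by
        have h1 : (|j|.toNat : ℤ) < (C : ℤ) := by exact_mod_cast hCgt
        omega
      have hyj := hsel1 C j hwin
      have hjabs := abs_le.1 hwin
      have hself : rInt C % (N : ℤ) = rInt C := Int.emod_emod_of_dvd _ dvd_rfl
      have key : ∀ s : ℤ, s % (N : ℤ) = rInt C → p (j + s) = p (j + rInt C) := by
        intro s hs
        calc p (j + s) = p ((j + s) % N) := hmod _
          _ = p ((j % N + s % N) % N) := by rw [Int.add_emod]
          _ = p ((j % N + rInt C % N) % N) := by rw [hs, hself]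
          _ = p ((j + rInt C) % N) := by rw [← Int.add_emod]
          _ = p (j + rInt C) := (hmod _).symm
      have hfin : p (j + rInt C) = shiftZ ((r₀ : ℕ) : ℤ) p j := by
        rw [hrval]; rfl
      rcases hsel2 C with hle | hge
      · have hii : j + sel C ≤ i := by omega
        have hrC : sel C % (N : ℤ) = rInt C := by rw [hrInt]; simp [if_pos hle]
        calc y j = x (j + sel C) := (hyj).symm
          _ = p (j + sel C) := (hxp_left _ hii).symm
          _ = p (j + rInt C) := key _ hrC
          _ = shiftZ ((r₀ : ℕ) : ℤ) p j := hfin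
      · have hii : i < j + sel C - n := by omega
        have hnle : ¬ (sel C ≤ i - C) := by omega
        have hrC : (sel C - n) % (N : ℤ) = rInt C := by rw [hrInt]; simp [if_neg hnle]
        have h2 : j + sel C - n + n = j + sel C := by omega
        have h3 := hxp_right (j + sel C - n) hii
        rw [h2] at h3
        calc y j = x (j + sel C) := (hyj).symm
          _ = p (j + sel C - n) := h3.symm
          _ = p (j + (sel C - n)) := by ring_nf
          _ = p (j + rInt C) := key _ hrC
          _ = shiftZ ((r₀ : ℕ) : ℤ) p j := hfin
  exact Set.Subset.antisymm hfwd (Set.union_subset subset_closure horb)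
end
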